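/- For a fixed x ∈ (0,1), the function a ↦ (log(1 + x^a))^(1/a) is increasing on (1,∞). -/

import Mathlib

theorem stmt_4 (x : ℝ) (hx : x ∈ Set.Ioo (0:ℝ) 1) :
    MonotoneOn (fun a : ℝ => (Real.log (1 + x ^ a)) ^ (1 / a)) (Set.Ioi 1) := by
  obtain ⟨hx0, hx1⟩ := hx
  have hlogx : Real.log x < 0 := Real.log_neg hx0 hx1
  -- basic facts for a > 1
  have ht0 : ∀ a : ℝ, 0 < x ^ a := fun a => Real.rpow_pos_of_pos hx0 a
  have ht1 : ∀ a : ℝ, 1 < a → x ^ a < 1 := fun a ha =>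
    Real.rpow_lt_one hx0.le hx1 (by linarith)
  have hL0 : ∀ a : ℝ, 1 < a → 0 < Real.log (1 + x ^ a) := fun a ha =>
    Real.log_pos (by have := ht0 a; linarith)
  have hLt : ∀ a : ℝ, Real.log (1 + x ^ a) ≤ x ^ a := fun a => by
    have h := Real.log_le_sub_one_of_pos (x := 1 + x ^ a) (by have := ht0 a; linarith)
    linarith
  have hL1 : ∀ a : ℝ, 1 < a → Real.log (1 + x ^ a) < 1 := fun a ha =>
    lt_of_le_of_lt (hLt a) (ht1 a ha)
  -- lower bound: t/(1+t) ≤ log(1+t)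
  have hLlb : ∀ a : ℝ, x ^ a / (1 + x ^ a) ≤ Real.log (1 + x ^ a) := by
    intro a
    have hpos : (0:ℝ) < 1 + x ^ a := by have := ht0 a; linarith
    have h := Real.log_le_sub_one_of_pos (x := (1 + x ^ a)⁻¹) (by positivity)
    rw [Real.log_inv] at h
    have : (1 + x ^ a)⁻¹ - 1 = -(x ^ a / (1 + x ^ a)) := by
      field_simp
      ring
    rw [this] at h
    linarith
  -- the auxiliary function g(a) = a⁻¹ * log (log (1 + x^a))
  set g : ℝ → ℝ := fun a => a⁻¹ * Real.log (Real.log (1 + x ^ a)) with hg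
  have hderiv : ∀ a : ℝ, 1 < a → HasDerivAt g
      (-(a^2)⁻¹ * Real.log (Real.log (1 + x ^ a)) +
        a⁻¹ * ((x ^ a * Real.log x / (1 + x ^ a)) / Real.log (1 + x ^ a))) a := by
    intro a ha
    have h1 : HasDerivAt (fun y : ℝ => x ^ y) (x ^ a * Real.log x) a :=
      (Real.hasStrictDerivAt_const_rpow hx0 a).hasDerivAt
    have h2 : HasDerivAt (fun y : ℝ => 1 + x ^ y) (x ^ a * Real.log x) a := by
      simpa using h1.const_add 1
    have hne : (1 : ℝ) + x ^ a ≠ 0 := by have := ht0 a; linarith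
    have h3 := h2.log hne
    have h4 := h3.log (ne_of_gt (hL0 a ha))
    have h5 : HasDerivAt (fun y : ℝ => y⁻¹) (-(a^2)⁻¹) a := by
      simpa using hasDerivAt_inv (by linarith : a ≠ 0)
    have := h5.mul h4
    exact this
  have hmono : MonotoneOn g (Set.Ioi 1) := by
    have hconv : Convex ℝ (Set.Ioi (1:ℝ)) := convex_Ioi 1
    have hint : interior (Set.Ioi (1:ℝ)) = Set.Ioi 1 := interior_Ioi
    apply monotoneOn_of_deriv_nonneg hconv
    · intro a ha
      exact (hderiv a ha).differentiableAt.continuousAt.continuousWithinAt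
    · rw [hint]
      intro a ha
      exact (hderiv a ha).differentiableAt.differentiableWithinAt
    · rw [hint]
      intro a ha
      rw [(hderiv a ha).deriv]
      have ha1 : (1:ℝ) < a := ha
      set t := x ^ a with htdef
      set L := Real.log (1 + t) with hLdef
      have ht0' : 0 < t := ht0 a
      have ht1' : t < 1 := ht1 a ha1
      have hL0' : 0 < L := hL0 a ha1
      have hL1' : L < 1 := hL1 a ha1
      have hLt' : L ≤ t := hLt a
      have hlogt : Real.log t = a * Real.log x := Real.log_rpow hx0 a
      have hlogL : Real.log L ≤ Real.log t := Real.log_le_log hL0' hLt'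
      have hlogtneg : Real.log t < 0 := Real.log_neg ht0' ht1'
      have hlb : t / (1 + t) ≤ L := hLlb a
      -- key: L * (-log L) ≥ (t/(1+t)) * (-log t)
      have key : t / (1 + t) * (-Real.log t) ≤ L * (-Real.log L) := by
        apply mul_le_mul hlb (by linarith) (by linarith) hL0'.le
      have hapos : (0:ℝ) < a := by linarith
      have h1t : (0:ℝ) < 1 + t := by linarith
      rw [hlogt] at key
      have ha2 : (0:ℝ) < a^2 := by positivity
      have expand : -(a^2)⁻¹ * Real.log L + a⁻¹ * (t * Real.log x / (1 + t) / L)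
          = (a^2)⁻¹ * (L⁻¹) * ((L * (-Real.log L)) - (t / (1+t) * (-(a * Real.log x)))) := by
        field_simp
        ring
      rw [expand]
      have : (0:ℝ) ≤ (L * (-Real.log L)) - (t / (1+t) * (-(a * Real.log x))) := by
        linarith
      positivity
  -- conclude
  intro a ha b hb hab
  have hga := hmono ha hb hab
  have hfa : Real.log (1 + x ^ a) ^ (1/a) = Real.exp (g a) := by
    rw [Real.rpow_def_of_pos (hL0 a ha)]
    congr 1
    rw [hg]
    ring
  have hfb : Real.log (1 + x ^ b) ^ (1/b) = Real.exp (g b) := by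
    rw [Real.rpow_def_of_pos (hL0 b hb)]
    congr 1
    rw [hg]
    ring
  simp only
  rw [hfa, hfb]
  exact Real.exp_le_exp.mpr hga
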